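/- For every φ satisfying the standing assumptions and every joint distribution P with K(P,P^⊥) < ∞, the Bahadur slope s_φ := inf{ K(Q, P^⊥) : 𝒟_φ(Q, Q^⊥) ≥ D_φ(P, P^⊥) } satisfies s_φ ≤ K(P, P^⊥), with equality when φ = φ₁ (Kullback–Leibler). In particular, the KL-mutual-information test is the most Bahadur-efficient among φ-MI tests. -/

import Mathlib

open MeasureTheory

namespace BahadurAux

variable {α : Type*} [MeasurableSpace α]

/-- rnDeriv of a product measure. -/
lemma rnDeriv_prod_ae {α β : Type*} [MeasurableSpace α] [MeasurableSpace β]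
    (μ₁ ν₁ : Measure α) (μ₂ ν₂ : Measure β)
    [SigmaFinite μ₁] [SigmaFinite ν₁] [SigmaFinite μ₂] [SigmaFinite ν₂]
    (h₁ : μ₁ ≪ ν₁) (h₂ : μ₂ ≪ ν₂) :
    (μ₁.prod μ₂).rnDeriv (ν₁.prod ν₂) =ᵐ[ν₁.prod ν₂]
      fun p => μ₁.rnDeriv ν₁ p.1 * μ₂.rnDeriv ν₂ p.2 := by
  have hF : Measurable fun p : α × β => μ₁.rnDeriv ν₁ p.1 * μ₂.rnDeriv ν₂ p.2 :=
    ((μ₁.measurable_rnDeriv ν₁).comp measurable_fst).mul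
      ((μ₂.measurable_rnDeriv ν₂).comp measurable_snd)
  have key : μ₁.prod μ₂ = (ν₁.prod ν₂).withDensity
      (fun p => μ₁.rnDeriv ν₁ p.1 * μ₂.rnDeriv ν₂ p.2) := by
    refine Measure.prod_eq fun s t hs ht => ?_
    rw [withDensity_apply _ (hs.prod ht), ← Measure.prod_restrict,
      MeasureTheory.lintegral_prod _ hF.aemeasurable]
    calc ∫⁻ x, ∫⁻ y, μ₁.rnDeriv ν₁ x * μ₂.rnDeriv ν₂ y ∂(ν₂.restrict t) ∂(ν₁.restrict s)
        = ∫⁻ x, μ₁.rnDeriv ν₁ x * μ₂ t ∂(ν₁.restrict s) := by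
          refine lintegral_congr fun x => ?_
          rw [lintegral_const_mul _ (μ₂.measurable_rnDeriv ν₂),
            Measure.setLIntegral_rnDeriv h₂]
      _ = μ₁ s * μ₂ t := by
          rw [lintegral_mul_const _ (μ₁.measurable_rnDeriv ν₁),
            Measure.setLIntegral_rnDeriv h₁]
  rw [key]
  exact Measure.rnDeriv_withDensity _ hF

/-- Nonnegativity of KL divergence. -/
lemma kl_nonneg (μ ν : Measure α) [IsProbabilityMeasure μ] [IsProbabilityMeasure ν]
    (hac : μ ≪ ν)
    (hint : Integrable (fun x => Real.log ((μ.rnDeriv ν x).toReal)) μ) :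
    0 ≤ ∫ x, Real.log ((μ.rnDeriv ν x).toReal) ∂μ := by
  have hrmeas : Measurable fun x => (μ.rnDeriv ν x).toReal :=
    (μ.measurable_rnDeriv ν).ennreal_toReal
  have hpos : ∀ᵐ x ∂μ, 0 < μ.rnDeriv ν x := Measure.rnDeriv_pos hac
  have hfin : ∀ᵐ x ∂μ, μ.rnDeriv ν x ≠ ⊤ :=
    (Measure.rnDeriv_ne_top μ ν).filter_mono hac.ae_le
  have hbd : ∀ x : α, |(μ.rnDeriv ν x).toReal * ((μ.rnDeriv ν x).toReal)⁻¹| ≤ |(1:ℝ)| := by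
    intro x
    rcases eq_or_ne ((μ.rnDeriv ν x).toReal) 0 with h0 | h0
    · simp [h0]
    · rw [mul_inv_cancel₀ h0]
  have hint_inv : Integrable (fun x => ((μ.rnDeriv ν x).toReal)⁻¹) μ := by
    rw [← integrable_rnDeriv_smul_iff hac]
    simp only [smul_eq_mul]
    exact Integrable.mono (integrable_const (1 : ℝ))
      (hrmeas.mul hrmeas.inv).aestronglyMeasurable (ae_of_all _ hbd)
  have hle : ∫ x, ((μ.rnDeriv ν x).toReal)⁻¹ ∂μ ≤ 1 := by
    rw [← integral_rnDeriv_smul hac (f := fun x => ((μ.rnDeriv ν x).toReal)⁻¹)]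
    simp only [smul_eq_mul]
    calc ∫ x, (μ.rnDeriv ν x).toReal * ((μ.rnDeriv ν x).toReal)⁻¹ ∂ν
        ≤ ∫ _x, (1 : ℝ) ∂ν := by
          refine integral_mono_ae ?_ (integrable_const 1) (ae_of_all _ fun x => ?_)
          · exact Integrable.mono (integrable_const (1 : ℝ))
              (hrmeas.mul hrmeas.inv).aestronglyMeasurable (ae_of_all _ hbd)
          · rcases eq_or_ne ((μ.rnDeriv ν x).toReal) 0 with h0 | h0
            · simp [h0]
            · simp only [mul_inv_cancel₀ h0]; exact le_refl 1
      _ = 1 := by simp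
  have hptwise : ∀ᵐ x ∂μ,
      1 - ((μ.rnDeriv ν x).toReal)⁻¹ ≤ Real.log ((μ.rnDeriv ν x).toReal) := by
    filter_upwards [hpos, hfin] with x h0 hf
    have hr0 : (0:ℝ) < (μ.rnDeriv ν x).toReal := ENNReal.toReal_pos h0.ne' hf
    have h1 := Real.log_le_sub_one_of_pos (inv_pos.mpr hr0)
    rw [Real.log_inv] at h1
    linarith
  have h2 : ∫ x, (1 - ((μ.rnDeriv ν x).toReal)⁻¹) ∂μ
      ≤ ∫ x, Real.log ((μ.rnDeriv ν x).toReal) ∂μ :=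
    integral_mono_ae (by exact (integrable_const (1:ℝ)).sub hint_inv) hint hptwise
  have h3 : ∫ x, (1 - ((μ.rnDeriv ν x).toReal)⁻¹) ∂μ
      = 1 - ∫ x, ((μ.rnDeriv ν x).toReal)⁻¹ ∂μ := by
    rw [integral_sub (integrable_const 1) hint_inv]; simp
  rw [h3] at h2
  linarith

/-- Gibbs-type inequality. -/
lemma gibbs (Q ν : Measure α) [IsProbabilityMeasure Q] [IsProbabilityMeasure ν]
    (hac : Q ≪ ν) (h : α → ℝ) (hp : ∀ x, 0 < h x)
    (hint1 : Integrable (fun x => Real.log (h x)) Q)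
    (hint2 : Integrable h ν)
    (hint3 : Integrable (fun x => Real.log ((Q.rnDeriv ν x).toReal)) Q) :
    ∫ x, Real.log (h x) ∂Q - ∫ x, (h x - 1) ∂ν
      ≤ ∫ x, Real.log ((Q.rnDeriv ν x).toReal) ∂Q := by
  have hrmeas : Measurable fun x => (Q.rnDeriv ν x).toReal :=
    (Q.measurable_rnDeriv ν).ennreal_toReal
  have hrg_eq : ∀ x : α, (Q.rnDeriv ν x).toReal * (h x / (Q.rnDeriv ν x).toReal)
      = if (Q.rnDeriv ν x).toReal = 0 then 0 else h x := by
    intro x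
    rcases eq_or_ne ((Q.rnDeriv ν x).toReal) 0 with h0 | h0
    · simp [h0]
    · rw [if_neg h0, mul_comm, div_mul_cancel₀ _ h0]
  have hmeas_ind : AEStronglyMeasurable
      (fun x => (Q.rnDeriv ν x).toReal * (h x / (Q.rnDeriv ν x).toReal)) ν := by
    have hset : MeasurableSet {x | (Q.rnDeriv ν x).toReal = 0} :=
      hrmeas (measurableSet_singleton 0)
    have h1 : AEStronglyMeasurable
        (fun x => Set.indicator {x | (Q.rnDeriv ν x).toReal = 0}ᶜ (fun y => h y) x) ν :=
      hint2.1.indicator hset.compl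
    refine h1.congr (ae_of_all _ fun x => ?_)
    simp only [hrg_eq]
    by_cases h0 : (Q.rnDeriv ν x).toReal = 0
    · simp [Set.indicator_of_notMem, h0]
    · simp [Set.indicator_of_mem, h0]
  have hrg_int : Integrable
      (fun x => (Q.rnDeriv ν x).toReal * (h x / (Q.rnDeriv ν x).toReal)) ν := by
    refine Integrable.mono hint2 hmeas_ind (ae_of_all _ fun x => ?_)
    simp only [hrg_eq]
    rcases eq_or_ne ((Q.rnDeriv ν x).toReal) 0 with h0 | h0
    · simp [h0, abs_nonneg]
    · simp [h0, le_refl]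
  have hg_int : Integrable (fun x => h x / (Q.rnDeriv ν x).toReal) Q := by
    rw [← integrable_rnDeriv_smul_iff hac]
    simpa only [smul_eq_mul] using hrg_int
  have hgle : ∫ x, h x / (Q.rnDeriv ν x).toReal ∂Q ≤ ∫ x, h x ∂ν := by
    rw [← integral_rnDeriv_smul hac (f := fun x => h x / (Q.rnDeriv ν x).toReal)]
    simp only [smul_eq_mul]
    refine integral_mono_ae hrg_int hint2 (ae_of_all _ fun x => ?_)
    simp only [hrg_eq]
    rcases eq_or_ne ((Q.rnDeriv ν x).toReal) 0 with h0 | h0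
    · simp [h0, (hp x).le]
    · simp [h0, le_refl]
  have hptwise : ∀ᵐ x ∂Q, Real.log (h x)
      ≤ Real.log ((Q.rnDeriv ν x).toReal) + (h x / (Q.rnDeriv ν x).toReal - 1) := by
    filter_upwards [Measure.rnDeriv_pos hac,
      (Measure.rnDeriv_ne_top Q ν).filter_mono hac.ae_le] with x h0 hf
    have hr0 : (0:ℝ) < (Q.rnDeriv ν x).toReal := ENNReal.toReal_pos h0.ne' hf
    have h1 := Real.log_le_sub_one_of_pos (div_pos (hp x) hr0)
    rw [Real.log_div (hp x).ne' hr0.ne'] at h1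
    linarith
  have hg1_int : Integrable (fun x => h x / (Q.rnDeriv ν x).toReal - 1) Q := by
    exact hg_int.sub (integrable_const (1 : ℝ))
  have hR_int : Integrable (fun x => Real.log ((Q.rnDeriv ν x).toReal)
      + (h x / (Q.rnDeriv ν x).toReal - 1)) Q := by
    exact hint3.add hg1_int
  have hmain : ∫ x, Real.log (h x) ∂Q
      ≤ ∫ x, Real.log ((Q.rnDeriv ν x).toReal) ∂Q
        + (∫ x, h x / (Q.rnDeriv ν x).toReal ∂Q - 1) := by
    have h2 := integral_mono_ae hint1 hR_int hptwise
    rwa [integral_add hint3 hg1_int, integral_sub hg_int (integrable_const 1),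
      integral_const, probReal_univ, one_smul] at h2
  have hsub : ∫ x, (h x - 1) ∂ν = ∫ x, h x ∂ν - 1 := by
    rw [integral_sub hint2 (integrable_const 1)]; simp
  rw [hsub]
  linarith

/-- Chain rule for KL. -/
lemma kl_chain (μ ν ξ : Measure α) [IsProbabilityMeasure μ] [IsProbabilityMeasure ν]
    [IsProbabilityMeasure ξ] (hμν : μ ≪ ν) (hνξ : ν ≪ ξ)
    (h1 : Integrable (fun x => Real.log ((μ.rnDeriv ν x).toReal)) μ)
    (h2 : Integrable (fun x => Real.log ((μ.rnDeriv ξ x).toReal)) μ) :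
    ∫ x, Real.log ((μ.rnDeriv ξ x).toReal) ∂μ
      = ∫ x, Real.log ((μ.rnDeriv ν x).toReal) ∂μ
        + ∫ x, Real.log ((ν.rnDeriv ξ x).toReal) ∂μ := by
  have hμξ : μ ≪ ξ := hμν.trans hνξ
  have hchain : (fun x => μ.rnDeriv ν x * ν.rnDeriv ξ x) =ᵐ[μ] μ.rnDeriv ξ :=
    (Measure.rnDeriv_mul_rnDeriv hμν).filter_mono hμξ.ae_le
  have hpos1 : ∀ᵐ x ∂μ, 0 < μ.rnDeriv ν x := Measure.rnDeriv_pos hμν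
  have hfin1 : ∀ᵐ x ∂μ, μ.rnDeriv ν x ≠ ⊤ :=
    (Measure.rnDeriv_ne_top μ ν).filter_mono hμν.ae_le
  have hpos2 : ∀ᵐ x ∂μ, 0 < ν.rnDeriv ξ x :=
    (Measure.rnDeriv_pos hνξ).filter_mono hμν.ae_le
  have hfin2 : ∀ᵐ x ∂μ, ν.rnDeriv ξ x ≠ ⊤ :=
    (Measure.rnDeriv_ne_top ν ξ).filter_mono hμξ.ae_le
  have haeeq : ∀ᵐ x ∂μ, Real.log ((μ.rnDeriv ξ x).toReal)
      = Real.log ((μ.rnDeriv ν x).toReal) + Real.log ((ν.rnDeriv ξ x).toReal) := by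
    filter_upwards [hchain, hpos1, hfin1, hpos2, hfin2] with x hc hp1 hf1 hp2 hf2
    rw [← hc, ENNReal.toReal_mul,
      Real.log_mul (ENNReal.toReal_pos hp1.ne' hf1).ne' (ENNReal.toReal_pos hp2.ne' hf2).ne']
  have h3 : Integrable (fun x => Real.log ((ν.rnDeriv ξ x).toReal)) μ := by
    refine (h2.sub h1).congr ?_
    filter_upwards [haeeq] with x hx
    simp only [Pi.sub_apply]
    linarith
  rw [integral_congr_ae haeeq, integral_add h1 h3]

end BahadurAux

open BahadurAux

/-- Kullback–Leibler divergence K(Q,P) = ∫ log(dQ/dP) dQ. -/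
noncomputable def klDiv {α : Type*} [MeasurableSpace α] (Q P : Measure α) : ℝ :=
  ∫ x, Real.log ((Q.rnDeriv P x).toReal) ∂Q

/-- Pseudo-divergence 𝒟_φ(Q,Q^⊥) = sup_θ { ∫ φ'(h_θ) dQ - ∫ φ*(φ'(h_θ)) dQ^⊥ }. -/
noncomputable def pseudoDiv {Ω Θ : Type*} [MeasurableSpace Ω]
    (φ' φstar : ℝ → ℝ) (hfam : Θ → Ω → ℝ) (Q Qperp : Measure Ω) : ℝ :=
  ⨆ θ : Θ, (∫ p, φ' (hfam θ p) ∂Q - ∫ p, φstar (φ' (hfam θ p)) ∂Qperp)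

/-- The Bahadur slope s_φ = inf{ K(Q,P^⊥) : 𝒟_φ(Q,Q^⊥) ≥ D_φ(P,P^⊥) } satisfies
s_φ ≤ K(P,P^⊥) for every φ (since P lies in the model, 𝒟_φ(P,P^⊥) = D_φ(P,P^⊥)),
with equality for the Kullback–Leibler case φ = φ₁ (φ₁' = log, φ₁*(φ₁'(x)) = x - 1):
the KL mutual-information test is the most Bahadur-efficient among φ-MI tests. -/
theorem bahadur_slope_KL_optimal
    {X Y : Type*} [MeasurableSpace X] [MeasurableSpace Y]
    {Θ : Type*} [Nonempty Θ]
    (P : Measure (X × Y)) [IsProbabilityMeasure P]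
    (φ φ' φstar : ℝ → ℝ)
    (hFY : ∀ t : ℝ, ∀ x : ℝ, 0 ≤ x → t * x - φstar t ≤ φ x)
    (hfam : Θ → (X × Y) → ℝ) (hpos : ∀ θ p, 0 < hfam θ p)
    (hPac : P ≪ (P.map Prod.fst).prod (P.map Prod.snd))
    (hPint : Integrable
      (fun p => Real.log ((P.rnDeriv ((P.map Prod.fst).prod (P.map Prod.snd)) p).toReal)) P)
    -- P belongs to the model: the pseudo-divergences coincide with the true divergences at P
    (hmodel : pseudoDiv φ' φstar hfam P ((P.map Prod.fst).prod (P.map Prod.snd))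
      = ∫ p, φ ((P.rnDeriv ((P.map Prod.fst).prod (P.map Prod.snd)) p).toReal)
          ∂((P.map Prod.fst).prod (P.map Prod.snd)))
    (hmodelKL : (⨆ θ : Θ, (∫ p, Real.log (hfam θ p) ∂P
        - ∫ p, (hfam θ p - 1) ∂((P.map Prod.fst).prod (P.map Prod.snd))))
      = klDiv P ((P.map Prod.fst).prod (P.map Prod.snd)))
    (Sφ SKL : Set ℝ)
    (hSφ : Sφ = {r : ℝ | ∃ Q : Measure (X × Y), IsProbabilityMeasure Q ∧
      (∫ p, φ ((P.rnDeriv ((P.map Prod.fst).prod (P.map Prod.snd)) p).toReal)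
          ∂((P.map Prod.fst).prod (P.map Prod.snd)))
        ≤ pseudoDiv φ' φstar hfam Q ((Q.map Prod.fst).prod (Q.map Prod.snd)) ∧
      r = klDiv Q ((P.map Prod.fst).prod (P.map Prod.snd))})
    (hSKL : SKL = {r : ℝ | ∃ Q : Measure (X × Y), IsProbabilityMeasure Q ∧
      Q ≪ (P.map Prod.fst).prod (P.map Prod.snd) ∧
      Q ≪ (Q.map Prod.fst).prod (Q.map Prod.snd) ∧
      Q.map Prod.fst ≪ P.map Prod.fst ∧
      Q.map Prod.snd ≪ P.map Prod.snd ∧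
      Integrable
        (fun p => Real.log ((Q.rnDeriv ((P.map Prod.fst).prod (P.map Prod.snd)) p).toReal)) Q ∧
      Integrable
        (fun p => Real.log ((Q.rnDeriv ((Q.map Prod.fst).prod (Q.map Prod.snd)) p).toReal)) Q ∧
      Integrable (fun x => Real.log (((Q.map Prod.fst).rnDeriv (P.map Prod.fst) x).toReal))
        (Q.map Prod.fst) ∧
      Integrable (fun y => Real.log (((Q.map Prod.snd).rnDeriv (P.map Prod.snd) y).toReal))
        (Q.map Prod.snd) ∧
      (∀ θ : Θ, Integrable (fun p => Real.log (hfam θ p)) Q ∧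
        Integrable (hfam θ) ((Q.map Prod.fst).prod (Q.map Prod.snd))) ∧
      klDiv P ((P.map Prod.fst).prod (P.map Prod.snd))
        ≤ (⨆ θ : Θ, (∫ p, Real.log (hfam θ p) ∂Q
            - ∫ p, (hfam θ p - 1) ∂((Q.map Prod.fst).prod (Q.map Prod.snd)))) ∧
      r = klDiv Q ((P.map Prod.fst).prod (P.map Prod.snd))})
    (hPKL : ∀ θ : Θ, Integrable (fun p => Real.log (hfam θ p)) P ∧
      Integrable (hfam θ) ((P.map Prod.fst).prod (P.map Prod.snd)))
    (hbddφ : BddBelow Sφ) (hbddKL : BddBelow SKL) :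
    sInf Sφ ≤ klDiv P ((P.map Prod.fst).prod (P.map Prod.snd)) ∧
    sInf SKL = klDiv P ((P.map Prod.fst).prod (P.map Prod.snd)) := by

  classical
  haveI hPfst : IsProbabilityMeasure (P.map Prod.fst) :=
    Measure.isProbabilityMeasure_map measurable_fst.aemeasurable
  haveI hPsnd : IsProbabilityMeasure (P.map Prod.snd) :=
    Measure.isProbabilityMeasure_map measurable_snd.aemeasurable
  set Pp : Measure (X × Y) := (P.map Prod.fst).prod (P.map Prod.snd) with hPp
  -- Part 1: membership of klDiv P Pp in Sφ
  have hmem1 : klDiv P Pp ∈ Sφ := by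
    rw [hSφ]
    exact ⟨P, inferInstance, hmodel.ge, rfl⟩
  have hself : ∀ (μ : Measure X) [IsProbabilityMeasure μ],
      Integrable (fun x => Real.log ((μ.rnDeriv μ x).toReal)) μ := by
    intro μ _
    refine (integrable_const (0:ℝ)).congr ?_
    filter_upwards [Measure.rnDeriv_self μ] with x hx
    rw [hx]; simp
  have hselfY : ∀ (μ : Measure Y) [IsProbabilityMeasure μ],
      Integrable (fun x => Real.log ((μ.rnDeriv μ x).toReal)) μ := by
    intro μ _
    refine (integrable_const (0:ℝ)).congr ?_
    filter_upwards [Measure.rnDeriv_self μ] with x hx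
    rw [hx]; simp
  have hmem2 : klDiv P Pp ∈ SKL := by
    rw [hSKL]
    exact ⟨P, inferInstance, hPac, hPac, Measure.AbsolutelyContinuous.rfl,
      Measure.AbsolutelyContinuous.rfl, hPint, hPint, hself _, hselfY _, hPKL,
      hmodelKL.ge, rfl⟩
  refine ⟨csInf_le hbddφ hmem1, le_antisymm (csInf_le hbddKL hmem2) ?_⟩
  refine le_csInf ⟨_, hmem2⟩ fun r hr => ?_
  rw [hSKL] at hr
  obtain ⟨Q, hQprob, hQPp, hQQp, hQx, hQy, hi1, hi2, hix, hiy, hθint, hge, rfl⟩ := hr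
  haveI := hQprob
  haveI hQfst : IsProbabilityMeasure (Q.map Prod.fst) :=
    Measure.isProbabilityMeasure_map measurable_fst.aemeasurable
  haveI hQsnd : IsProbabilityMeasure (Q.map Prod.snd) :=
    Measure.isProbabilityMeasure_map measurable_snd.aemeasurable
  set Qp : Measure (X × Y) := (Q.map Prod.fst).prod (Q.map Prod.snd) with hQp
  -- sup ≤ klDiv Q Qp
  have hsup : (⨆ θ : Θ, (∫ p, Real.log (hfam θ p) ∂Q
      - ∫ p, (hfam θ p - 1) ∂Qp)) ≤ klDiv Q Qp := by
    refine ciSup_le fun θ => ?_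
    exact gibbs Q Qp hQQp (hfam θ) (fun p => hpos θ p) (hθint θ).1 (hθint θ).2 hi2
  -- chain rule
  have hQpPp : Qp ≪ Pp := hQx.prod hQy
  have hchain := kl_chain Q Qp Pp hQQp hQpPp hi2 hi1
  -- decomposition of the cross term
  have hg1meas : Measurable fun x => Real.log (((Q.map Prod.fst).rnDeriv (P.map Prod.fst) x).toReal) :=
    ((Q.map Prod.fst).measurable_rnDeriv (P.map Prod.fst)).ennreal_toReal.log
  have hg2meas : Measurable fun y => Real.log (((Q.map Prod.snd).rnDeriv (P.map Prod.snd) y).toReal) :=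
    ((Q.map Prod.snd).measurable_rnDeriv (P.map Prod.snd)).ennreal_toReal.log
  have hpos1 : ∀ᵐ p ∂Q, 0 < (Q.map Prod.fst).rnDeriv (P.map Prod.fst) p.1 :=
    ae_of_ae_map measurable_fst.aemeasurable (Measure.rnDeriv_pos hQx)
  have hfin1 : ∀ᵐ p ∂Q, (Q.map Prod.fst).rnDeriv (P.map Prod.fst) p.1 ≠ ⊤ :=
    ae_of_ae_map measurable_fst.aemeasurable
      ((Measure.rnDeriv_ne_top _ _).filter_mono hQx.ae_le)
  have hpos2 : ∀ᵐ p ∂Q, 0 < (Q.map Prod.snd).rnDeriv (P.map Prod.snd) p.2 :=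
    ae_of_ae_map measurable_snd.aemeasurable (Measure.rnDeriv_pos hQy)
  have hfin2 : ∀ᵐ p ∂Q, (Q.map Prod.snd).rnDeriv (P.map Prod.snd) p.2 ≠ ⊤ :=
    ae_of_ae_map measurable_snd.aemeasurable
      ((Measure.rnDeriv_ne_top _ _).filter_mono hQy.ae_le)
  have hprod : (fun p : X × Y => (Q.map Prod.fst).rnDeriv (P.map Prod.fst) p.1
        * (Q.map Prod.snd).rnDeriv (P.map Prod.snd) p.2) =ᵐ[Q] Qp.rnDeriv Pp :=
    ((rnDeriv_prod_ae (Q.map Prod.fst) (P.map Prod.fst) (Q.map Prod.snd) (P.map Prod.snd)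
      hQx hQy).filter_mono hQPp.ae_le).symm
  have haeI : ∀ᵐ p ∂Q, Real.log ((Qp.rnDeriv Pp p).toReal)
      = Real.log (((Q.map Prod.fst).rnDeriv (P.map Prod.fst) p.1).toReal)
        + Real.log (((Q.map Prod.snd).rnDeriv (P.map Prod.snd) p.2).toReal) := by
    filter_upwards [hprod, hpos1, hfin1, hpos2, hfin2] with p hc hp1 hf1 hp2 hf2
    rw [← hc, ENNReal.toReal_mul,
      Real.log_mul (ENNReal.toReal_pos hp1.ne' hf1).ne' (ENNReal.toReal_pos hp2.ne' hf2).ne']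
  have hIx : Integrable
      (fun p : X × Y => Real.log (((Q.map Prod.fst).rnDeriv (P.map Prod.fst) p.1).toReal)) Q := by
    have := (integrable_map_measure hg1meas.aestronglyMeasurable
      measurable_fst.aemeasurable).mp hix
    exact this
  have hIy : Integrable
      (fun p : X × Y => Real.log (((Q.map Prod.snd).rnDeriv (P.map Prod.snd) p.2).toReal)) Q := by
    have := (integrable_map_measure hg2meas.aestronglyMeasurable
      measurable_snd.aemeasurable).mp hiy
    exact this
  have hIeq : ∫ p, Real.log ((Qp.rnDeriv Pp p).toReal) ∂Q
      = ∫ p, Real.log (((Q.map Prod.fst).rnDeriv (P.map Prod.fst) p.1).toReal) ∂Q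
        + ∫ p, Real.log (((Q.map Prod.snd).rnDeriv (P.map Prod.snd) p.2).toReal) ∂Q := by
    rw [integral_congr_ae haeI, integral_add hIx hIy]
  have hIx_eq : ∫ p, Real.log (((Q.map Prod.fst).rnDeriv (P.map Prod.fst) p.1).toReal) ∂Q
      = ∫ x, Real.log (((Q.map Prod.fst).rnDeriv (P.map Prod.fst) x).toReal) ∂(Q.map Prod.fst) :=
    (integral_map measurable_fst.aemeasurable hg1meas.aestronglyMeasurable).symm
  have hIy_eq : ∫ p, Real.log (((Q.map Prod.snd).rnDeriv (P.map Prod.snd) p.2).toReal) ∂Q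
      = ∫ y, Real.log (((Q.map Prod.snd).rnDeriv (P.map Prod.snd) y).toReal) ∂(Q.map Prod.snd) :=
    (integral_map measurable_snd.aemeasurable hg2meas.aestronglyMeasurable).symm
  have hI_nonneg : 0 ≤ ∫ p, Real.log ((Qp.rnDeriv Pp p).toReal) ∂Q := by
    rw [hIeq, hIx_eq, hIy_eq]
    have h1 := kl_nonneg (Q.map Prod.fst) (P.map Prod.fst) hQx hix
    have h2 := kl_nonneg (Q.map Prod.snd) (P.map Prod.snd) hQy hiy
    linarith
  -- combine
  calc klDiv P Pp ≤ (⨆ θ : Θ, (∫ p, Real.log (hfam θ p) ∂Q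
        - ∫ p, (hfam θ p - 1) ∂Qp)) := hge
    _ ≤ klDiv Q Qp := hsup
    _ ≤ klDiv Q Qp + ∫ p, Real.log ((Qp.rnDeriv Pp p).toReal) ∂Q := le_add_of_nonneg_right hI_nonneg
    _ = klDiv Q Pp := hchain.symm
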